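/- arXiv:2409.07499 — 2 statements merged into one kernel-verified Lean document; each statement's English description precedes it below -/
import Mathlib

section
/- The Petersen graph has no proper 3-edge-coloring. -/
/-- The Petersen graph: vertices are the 2-element subsets of a 5-element set, with two
vertices adjacent exactly when the corresponding subsets are disjoint. -/
def PetersenGraph : SimpleGraph {s : Finset (Fin 5) // s.card = 2} where
  Adj a b := Disjoint a.1 b.1
  symm := ⟨fun _ _ h => h.symm⟩
  loopless := ⟨fun a h => by
    try simp only at h
    rw [disjoint_self] at h
    have h2 := a.2
    rw [h] at h2
    simp at h2⟩

/-- A proper 3-edge-coloring of a simple graph `G`: any two distinct edges sharing a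
common vertex receive distinct colors. -/
def ProperEdgeColoring3 {V : Type*} (G : SimpleGraph V) (c : Sym2 V → Fin 3) : Prop :=
  ∀ e ∈ G.edgeSet, ∀ f ∈ G.edgeSet, e ≠ f → (∃ v, v ∈ e ∧ v ∈ f) → c e ≠ c f

namespace PetersenAux

abbrev V := {s : Finset (Fin 5) // s.card = 2}

def vsets : Fin 10 → Finset (Fin 5) :=
  ![{0,1},{0,2},{0,3},{0,4},{1,2},{1,3},{1,4},{2,3},{2,4},{3,4}]

lemma vsets_card : ∀ i, (vsets i).card = 2 := by decide

/-- The ten vertices of the Petersen graph. -/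
def vert (i : Fin 10) : V := ⟨vsets i, vsets_card i⟩

/-- The endpoints of the fifteen edges. -/
def ends : Fin 15 → Fin 10 × Fin 10 :=
  ![(0,7),(0,8),(0,9),(1,5),(1,6),(1,9),(2,4),(2,6),(2,8),(3,4),(3,5),(3,7),(4,9),(5,8),(6,7)]

def edg (i : Fin 15) : Sym2 V := s(vert (ends i).1, vert (ends i).2)

/-- Conflict triples `(i, j, k)`: edges `i < j` sharing the vertex `k`. -/
def conflicts : List (Fin 15 × Fin 15 × Fin 10) :=
  [(0,1,0),(0,2,0),(1,2,0),(3,4,1),(3,5,1),(4,5,1),(6,7,2),(6,8,2),(7,8,2),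
   (9,10,3),(9,11,3),(10,11,3),(6,9,4),(6,12,4),(9,12,4),(3,10,5),(3,13,5),(10,13,5),
   (4,7,6),(4,14,6),(7,14,6),(0,11,7),(0,14,7),(11,14,7),(1,8,8),(1,13,8),(8,13,8),
   (2,5,9),(2,12,9),(5,12,9)]

lemma vert_inj : ∀ i j : Fin 10, vert i = vert j → i = j := by decide

lemma adj_all : ∀ i : Fin 15, ∀ a ∈ (vert (ends i).1).1, a ∉ (vert (ends i).2).1 := by decide

lemma keyIdx : ∀ p ∈ conflicts,
    (¬((ends p.1).1 = (ends p.2.1).1 ∧ (ends p.1).2 = (ends p.2.1).2) ∧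
     ¬((ends p.1).1 = (ends p.2.1).2 ∧ (ends p.1).2 = (ends p.2.1).1)) ∧
    (p.2.2 = (ends p.1).1 ∨ p.2.2 = (ends p.1).2) ∧
    (p.2.2 = (ends p.2.1).1 ∨ p.2.2 = (ends p.2.1).2) := by
  intro p hp
  fin_cases hp <;> decide

/-- A full assignment of colors to the 15 edges is consistent if conflicting edges
get distinct colors. -/
def ConsistentFull (L : List (Fin 3)) : Prop :=
  ∀ p ∈ conflicts, p.1.1 < L.length → p.2.1.1 < L.length →
    L.getD p.1.1 0 ≠ L.getD p.2.1.1 0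

/-- Can edge number `l.length` get color `c`, given the partial assignment `l`? -/
def step (l : List (Fin 3)) (c : Fin 3) : Bool :=
  conflicts.all fun p =>
    decide (p.2.1.1 = l.length → p.1.1 < l.length → l.getD p.1.1 0 ≠ c)

/-- Exhaustive search with pruning for a consistent coloring extending `l`. -/
def search : Nat → List (Fin 3) → Bool
  | 0, _ => true
  | n+1, l => ([0,1,2] : List (Fin 3)).any fun c => step l c && search n (l ++ [c])

lemma search_complete (L : List (Fin 3)) (hL : ConsistentFull L) :
    ∀ (n : Nat) (l t : List (Fin 3)), l ++ t = L → t.length = n → search n l = true := by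
  intro n
  induction n with
  | zero => intro l t _ _; rfl
  | succ n ih =>
    intro l t hlt ht
    match t with
    | c :: t' =>
      simp only [search, List.any_eq_true, Bool.and_eq_true]
      refine ⟨c, by fin_cases c <;> simp, ?_, ?_⟩
      · rw [step, List.all_eq_true]
        intro p hp
        rw [decide_eq_true_iff]
        intro he hlt1
        have h1 : p.1.1 < L.length := by
          rw [← hlt]; simp; omega
        have h2 : p.2.1.1 < L.length := by
          rw [← hlt]; simp; omega
        have hne := hL p hp h1 h2
        rw [← hlt] at hne
        rw [List.getD_append _ _ _ _ hlt1, he,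
            List.getD_append_right _ _ _ _ le_rfl, Nat.sub_self] at hne
        simpa using hne
      · exact ih (l ++ [c]) t' (by simpa using hlt) (by simpa using ht)

set_option maxRecDepth 100000 in
set_option maxHeartbeats 4000000 in
lemma search_false : search 15 [] = false := by decide

end PetersenAux

open PetersenAux in
/-- The Petersen graph has no proper 3-edge-coloring. -/
theorem petersenGraph_no_proper_three_edge_coloring :
    ¬ ∃ c : Sym2 {s : Finset (Fin 5) // s.card = 2} → Fin 3,
        ProperEdgeColoring3 PetersenGraph c := by
  rintro ⟨c, hc⟩
  set L : List (Fin 3) := List.ofFn (fun i => c (edg i)) with hLdef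
  have hlen : L.length = 15 := by simp [hLdef]
  have hfull : ConsistentFull L := by
    intro p hp h1 h2
    obtain ⟨⟨hd1, hd2⟩, hv1, hv2⟩ := keyIdx p hp
    have h1' : p.1.1 < 15 := by omega
    have h2' : p.2.1.1 < 15 := by omega
    rw [List.getD_eq_getElem _ _ h1, List.getD_eq_getElem _ _ h2]
    simp only [hLdef, List.getElem_ofFn]
    rw [show (⟨p.1.1, by simp [hLdef]⟩ : Fin 15) = p.1 from rfl,
        show (⟨p.2.1.1, by simp [hLdef]⟩ : Fin 15) = p.2.1 from rfl]
    have hmem1 : edg p.1 ∈ PetersenGraph.edgeSet :=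
      PetersenGraph.mem_edgeSet.mpr (Finset.disjoint_left.mpr (adj_all p.1))
    have hmem2 : edg p.2.1 ∈ PetersenGraph.edgeSet :=
      PetersenGraph.mem_edgeSet.mpr (Finset.disjoint_left.mpr (adj_all p.2.1))
    have hne : edg p.1 ≠ edg p.2.1 := by
      intro h
      rcases Sym2.eq_iff.mp h with ⟨ha, hb⟩ | ⟨ha, hb⟩
      · exact hd1 ⟨vert_inj _ _ ha, vert_inj _ _ hb⟩
      · exact hd2 ⟨vert_inj _ _ ha, vert_inj _ _ hb⟩
    exact hc _ hmem1 _ hmem2 hne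
      ⟨vert p.2.2,
        Sym2.mem_iff.mpr (hv1.imp (congrArg vert) (congrArg vert)),
        Sym2.mem_iff.mpr (hv2.imp (congrArg vert) (congrArg vert))⟩
  have := search_complete L hfull 15 [] L rfl hlen
  rw [search_false] at this
  exact Bool.false_ne_true this
end

section
/- Let R be a commutative ring with invertible elements t, v, w and let Q be an R-module, with operations a ⋆ b = t·a + (1−t)·b, a ♯ b = t⁻¹·a + (1−t⁻¹)·b, and virtual operations a ⋆ v = v·a, a ♯ v = v⁻¹·a (similarly for w). Then for every a ∈ Q: [(((a ♯ w) ⋆ v) ⋆ w) ♯ v] ⋆ [(a ♯ w) ⋆ v] = t·a + ((1−t)·v·w⁻¹)·a. Consequently, the defining relation of the double virtual trefoil, namely that this element equals a, is equivalent to (t·(1 − v·w⁻¹) + v·w⁻¹)·a = 0 + a, i.e. the generalized Alexander polynomial of the double virtual trefoil is t(1 − v w⁻¹) + v w⁻¹. -/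
/-- In the generalized Alexander quandle with classical operations
`a ⋆ b = t·a + (1−t)·b`, `a ♯ b = t⁻¹·a + (1−t⁻¹)·b` and virtual operations
`a ⋆ v = v·a`, `a ♯ v = v⁻¹·a` (similarly for `w`), the defining expression of the
double virtual trefoil satisfies
`[(((a ♯ w) ⋆ v) ⋆ w) ♯ v] ⋆ [(a ♯ w) ⋆ v] = t·a + ((1−t)·v·w⁻¹)·a`,
and the relation that this element equals `a` is equivalent to
`(t(1 − v w⁻¹) + v w⁻¹)·a = 0 + a`, so `t(1 − v w⁻¹) + v w⁻¹` is the
generalized Alexander polynomial of the double virtual trefoil. -/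
theorem double_virtual_trefoil_alexander {R : Type*} [CommRing R] (t v w : Rˣ)
    {Q : Type*} [AddCommGroup Q] [Module R Q] :
    let star : Q → Q → Q := fun a b => (t : R) • a + (1 - (t : R)) • b
    let starV : Q → Q := fun a => (v : R) • a
    let sharpV : Q → Q := fun a => ((v⁻¹ : Rˣ) : R) • a
    let starW : Q → Q := fun a => (w : R) • a
    let sharpW : Q → Q := fun a => ((w⁻¹ : Rˣ) : R) • a
    ∀ a : Q,
      star (sharpV (starW (starV (sharpW a)))) (starV (sharpW a)) =
        (t : R) • a + ((1 - (t : R)) * (v : R) * ((w⁻¹ : Rˣ) : R)) • a ∧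
      (star (sharpV (starW (starV (sharpW a)))) (starV (sharpW a)) = a ↔
        ((t : R) * (1 - (v : R) * ((w⁻¹ : Rˣ) : R)) +
          (v : R) * ((w⁻¹ : Rˣ) : R)) • a = 0 + a) := by
  intro star starV sharpV starW sharpW a
  have h1 : star (sharpV (starW (starV (sharpW a)))) (starV (sharpW a)) =
      (t : R) • a + ((1 - (t : R)) * (v : R) * ((w⁻¹ : Rˣ) : R)) • a := by
    simp only [star, starV, sharpV, starW, sharpW, smul_smul]
    congr 1
    · congr 1
      have : ((v⁻¹ : Rˣ) : R) * ((w : R) * ((v : R) * ((w⁻¹ : Rˣ) : R))) = 1 := by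
        have hv := v.inv_mul
        have hw := w.mul_inv
        push_cast at hv hw ⊢
        calc ((v⁻¹ : Rˣ) : R) * ((w : R) * ((v : R) * ((w⁻¹ : Rˣ) : R)))
            = (((v⁻¹ : Rˣ) : R) * (v : R)) * ((w : R) * ((w⁻¹ : Rˣ) : R)) := by ring
          _ = 1 := by rw [hv, hw, one_mul]
      rw [this, mul_one]
    · congr 1
      ring
  refine ⟨h1, ?_⟩
  rw [h1, zero_add, ← add_smul]
  have h2 : (t : R) + (1 - (t : R)) * (v : R) * ((w⁻¹ : Rˣ) : R) =
      (t : R) * (1 - (v : R) * ((w⁻¹ : Rˣ) : R)) + (v : R) * ((w⁻¹ : Rˣ) : R) := by ring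
  rw [h2]
end
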